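/- If t₁ ≡_A t₂, then for any readonly call r and any sequential call s, r occurs before s in t₁ if and only if the corresponding occurrences satisfy r before s in t₂. Formally: the induced permutation from t₁ to t₂ preserves the relative order of every (readonly, sequential) pair and every (sequential, readonly) pair of occurrences. -/

import Mathlib

/-- Annotation classes for external calls. -/
inductive Ann where
  | sequential | readonly | unordered
deriving DecidableEq

/-- An external call: an identifier together with its annotation class. -/
structure Call where
  name : ℕ
  ann : Ann
deriving DecidableEq

/-- A swap of adjacent calls `a`, `b` is allowed iff neither is sequential
and not both are readonly. -/
def allowedSwap (a b : Call) : Prop :=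
  a.ann ≠ Ann.sequential ∧ b.ann ≠ Ann.sequential ∧
    ¬(a.ann = Ann.readonly ∧ b.ann = Ann.readonly)

/-- One allowed adjacent swap in a trace. -/
inductive SwapStep : List Call → List Call → Prop
  | swap (pre post : List Call) (a b : Call) (h : allowedSwap a b) :
      SwapStep (pre ++ a :: b :: post) (pre ++ b :: a :: post)

/-- `TraceEquiv t₁ t₂` (`t₁ ≡_A t₂`): `t₂` is obtained from `t₁` by a finite
sequence of allowed adjacent swaps. -/
def TraceEquiv : List Call → List Call → Prop :=
  Relation.ReflTransGen SwapStep

lemma swapStep_perm {t₁ t₂ : List Call} (h : SwapStep t₁ t₂) :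
    ∃ σ : Fin t₁.length ≃ Fin t₂.length,
      (∀ i : Fin t₁.length, t₂.get (σ i) = t₁.get i) ∧
      (∀ i j : Fin t₁.length,
        (((t₁.get i).ann = Ann.readonly ∧ (t₁.get j).ann = Ann.sequential) ∨
         ((t₁.get i).ann = Ann.sequential ∧ (t₁.get j).ann = Ann.readonly)) →
        (i < j ↔ σ i < σ j)) := by
  obtain ⟨pre, post, a, b, hab⟩ := h
  set l₁ := pre ++ a :: b :: post with hl₁
  set l₂ := pre ++ b :: a :: post with hl₂
  have hlen : l₁.length = l₂.length := by simp [hl₁, hl₂]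
  set n := pre.length with hn
  have hnlt : n < l₁.length := by simp [hl₁, hn]
  have hn1lt : n + 1 < l₁.length := by simp [hl₁, hn]
  let p : Fin l₁.length := ⟨n, hnlt⟩
  let q : Fin l₁.length := ⟨n + 1, hn1lt⟩
  refine ⟨(Equiv.swap p q).trans (finCongr hlen), ?_, ?_⟩
  · -- get fact
    intro i
    simp only [Equiv.trans_apply, finCongr_apply, List.get_eq_getElem, Fin.coe_cast]
    rcases eq_or_ne i p with rfl | hip
    · rw [Equiv.swap_apply_left]
      show l₂[n + 1]'_ = l₁[n]'_
      simp only [hl₁, hl₂]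
      rw [List.getElem_append_right (show pre.length ≤ n + 1 by omega),
        List.getElem_append_right (show pre.length ≤ n by omega)]
      simp [hn]
    rcases eq_or_ne i q with rfl | hiq
    · rw [Equiv.swap_apply_right]
      show l₂[n]'_ = l₁[n + 1]'_
      simp only [hl₁, hl₂]
      rw [List.getElem_append_right (show pre.length ≤ n + 1 by omega),
        List.getElem_append_right (show pre.length ≤ n by omega)]
      simp [hn]
    · rw [Equiv.swap_apply_of_ne_of_ne hip hiq]
      have hkp : i.1 ≠ n := fun hk => hip (Fin.ext hk)
      have hkq : i.1 ≠ n + 1 := fun hk => hiq (Fin.ext hk)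
      have hk1 : i.1 < l₁.length := i.2
      have hk2 : i.1 < l₂.length := hlen ▸ i.2
      show l₂[i.1]'_ = l₁[i.1]'_
      simp only [hl₁, hl₂] at hk1 hk2 ⊢
      rcases lt_or_ge i.1 n with hlt | hge
      · rw [List.getElem_append_left hlt, List.getElem_append_left hlt]
      · have hge2 : n + 2 ≤ i.1 := by omega
        rw [List.getElem_append_right (by omega), List.getElem_append_right (by omega)]
        rcases Nat.exists_eq_add_of_le (show 2 ≤ i.1 - pre.length by omega) with ⟨m, hm⟩
        simp [hm, Nat.add_comm 2 m]
  · -- order fact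
    have hpa : l₁.get p = a := by simp [hl₁, p, List.getElem_append, hn]
    have hqb : l₁.get q = b := by simp [hl₁, q, List.getElem_append, hn]
    intro i j hann
    have hi_or : (l₁.get i).ann = Ann.sequential ∨ (l₁.get j).ann = Ann.sequential := by
      tauto
    have hne : ∀ k : Fin l₁.length, (l₁.get k).ann = Ann.sequential →
        k.1 ≠ n ∧ k.1 ≠ n + 1 := by
      intro k hs
      constructor <;> intro hk
      · have : k = p := Fin.ext hk
        exact hab.1 (hpa ▸ this ▸ hs)
      · have : k = q := Fin.ext hk
        exact hab.2.1 (hqb ▸ this ▸ hs)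
    have hnotboth : (i.1 ≠ n ∧ i.1 ≠ n + 1) ∨ (j.1 ≠ n ∧ j.1 ≠ n + 1) := by
      rcases hi_or with hs | hs
      · exact Or.inl (hne i hs)
      · exact Or.inr (hne j hs)
    have hswap : ∀ k : Fin l₁.length,
        ((Equiv.swap p q k : Fin l₁.length) : ℕ) =
          if k.1 = n then n + 1 else if k.1 = n + 1 then n else k.1 := by
      intro k
      rcases eq_or_ne k.1 n with hk | hkp
      · have : k = p := Fin.ext hk
        subst this; simp [Equiv.swap_apply_left, q, p]
      rcases eq_or_ne k.1 (n + 1) with hk | hkq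
      · have : k = q := Fin.ext hk
        subst this
        simp only [Equiv.swap_apply_right]
        simp [p, q, hkp]
      · have h1 : k ≠ p := by simp [p, Fin.ext_iff, hkp]
        have h2 : k ≠ q := by simp [q, Fin.ext_iff, hkq]
        simp [Equiv.swap_apply_of_ne_of_ne h1 h2, hkp, hkq]
    simp only [Equiv.trans_apply, Fin.lt_def, finCongr_apply, Fin.coe_cast]
    rw [hswap i, hswap j]
    rcases hnotboth with ⟨h1, h2⟩ | ⟨h1, h2⟩ <;> split_ifs <;> omega

/-- if `t₁ ≡_A t₂`, the induced permutation of occurrences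
(matching equal calls) preserves the relative order of every
(readonly, sequential) and (sequential, readonly) pair of occurrences. -/
theorem traceEquiv_preserves_readonly_sequential_order (t₁ t₂ : List Call)
    (h : TraceEquiv t₁ t₂) :
    ∃ σ : Fin t₁.length ≃ Fin t₂.length,
      (∀ i : Fin t₁.length, t₂.get (σ i) = t₁.get i) ∧
      (∀ i j : Fin t₁.length,
        (((t₁.get i).ann = Ann.readonly ∧ (t₁.get j).ann = Ann.sequential) ∨
         ((t₁.get i).ann = Ann.sequential ∧ (t₁.get j).ann = Ann.readonly)) →
        (i < j ↔ σ i < σ j)) := by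
  induction h with
  | refl => exact ⟨Equiv.refl _, fun i => rfl, fun i j _ => Iff.rfl⟩
  | tail _hstep hstep ih =>
    obtain ⟨σ₁, hg₁, ho₁⟩ := ih
    obtain ⟨σ₂, hg₂, ho₂⟩ := swapStep_perm hstep
    refine ⟨σ₁.trans σ₂, fun i => by rw [Equiv.trans_apply, hg₂, hg₁], ?_⟩
    intro i j hann
    have hann' := hann
    rw [← hg₁ i, ← hg₁ j] at hann'
    rw [ho₁ i j hann, ho₂ _ _ hann']
    rfl
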